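/- arXiv:1312.6235 — 2 statements merged into one kernel-verified Lean document; each statement's English description precedes it below -/
import Mathlib

section
/- Null-criticality via coarea: let G be a positive p-harmonic function in Ω* = Ω\{0} with lim_{x→0} G = ∞ and lim_{x→∞̄} G = 0 (1 < p ≤ n case), and v = G^{(p−1)/p}. Then ∫_{{t₋ < G < t₊}} |∇v|^p dx = c₁ ∫_{t₋}^{t₊} dt/t, which tends to ∞ as t₊ → ∞ or as t₋ → 0. In particular ∫_{Ω*} |∇v|^p dx = ∞. -/
open MeasureTheory

abbrev E (n : ℕ) := EuclideanSpace ℝ (Fin n)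

private lemma log_int (t1 t2 : ℝ) (h1 : 0 < t1) (h : t1 < t2) :
    ∫ t in Set.Ioo t1 t2, 1 / t = Real.log t2 - Real.log t1 := by
  rw [← integral_Ioc_eq_integral_Ioo, ← intervalIntegral.integral_of_le h.le,
    integral_one_div, Real.log_div (by linarith : (0:ℝ) < t2).ne' h1.ne']
  rw [Set.uIcc_of_le h.le]
  rintro ⟨ha, hb⟩; linarith

/-- Null-criticality via coarea: with the coarea identity (constant `c > 0`) for a
positive `p`-harmonic `G` on `Ω \ {0}` with `G → ∞` at `0` and `G → 0` at infinity in `Ω`,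
and `v = G^{(p−1)/p}`, one has
`∫_{t1<G<t2} |∇v|^p = ((p−1)/p)^p c ∫_{t1}^{t2} dt/t → ∞`, and `∫_{Ω\{0}} |∇v|^p = ∞`. -/
theorem stmt11 (n : ℕ) (p : ℝ) (hp1 : 1 < p) (hpn : p ≤ n)
    (Ω : Set (E n)) (hΩ : IsOpen Ω) (h0 : (0 : E n) ∈ Ω)
    (G : E n → ℝ) (hGpos : ∀ x ∈ Ω \ {0}, 0 < G x)
    (hG : ContDiffOn ℝ 1 G (Ω \ {0}))
    (hG0 : Filter.Tendsto G (nhdsWithin 0 (Ω \ {0})) Filter.atTop)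
    (hGinf : Filter.Tendsto (fun x : Ω => G x) (Filter.cocompact Ω) (nhds 0))
    (c : ℝ) (hc : 0 < c)
    (hcoarea : ∀ g : ℝ → ℝ, Measurable g →
      ∫ x in Ω \ {0}, g (G x) * ‖gradient G x‖ ^ p = c * ∫ t in Set.Ioi (0:ℝ), g t) :
    let v : E n → ℝ := fun x => G x ^ ((p - 1) / p)
    (∀ t1 t2 : ℝ, 0 < t1 → t1 < t2 →
      ∫ x in {x | x ∈ Ω \ {0} ∧ t1 < G x ∧ G x < t2}, ‖gradient v x‖ ^ p
        = ((p - 1) / p) ^ p * c * ∫ t in Set.Ioo t1 t2, 1 / t) ∧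
    (∀ t1 : ℝ, 0 < t1 →
      Filter.Tendsto (fun t2 => ((p - 1) / p) ^ p * c * ∫ t in Set.Ioo t1 t2, 1 / t)
        Filter.atTop Filter.atTop) ∧
    (∫⁻ x in Ω \ {0}, ENNReal.ofReal (‖gradient v x‖ ^ p) = ⊤) := by
  intro v
  set q : ℝ := (p - 1) / p with hq_def
  have hp0 : (0:ℝ) < p := lt_trans one_pos hp1
  have hq : 0 < q := div_pos (by linarith) hp0
  have hU : IsOpen (Ω \ {0}) := hΩ.sdiff isClosed_singleton
  have hA : MeasurableSet (Ω \ {0}) := hU.measurableSet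
  have hqp : (0:ℝ) < q ^ p := Real.rpow_pos_of_pos hq p
  -- Part 1
  have part1 : ∀ t1 t2 : ℝ, 0 < t1 → t1 < t2 →
      ∫ x in {x | x ∈ Ω \ {0} ∧ t1 < G x ∧ G x < t2}, ‖gradient v x‖ ^ p
        = q ^ p * c * ∫ t in Set.Ioo t1 t2, 1 / t := by
    intro t1 t2 ht1 ht12
    set S : Set (E n) := {x | x ∈ Ω \ {0} ∧ t1 < G x ∧ G x < t2} with hS_def
    have hSsub : S ⊆ Ω \ {0} := fun x hx => hx.1
    have hSeq : S = (Ω \ {0}) ∩ G ⁻¹' (Set.Ioo t1 t2) := by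
      ext x
      simp only [hS_def, Set.mem_setOf_eq, Set.mem_inter_iff, Set.mem_preimage, Set.mem_Ioo]
    have hSopen : IsOpen S := by
      rw [hSeq]
      exact (hG.continuousOn).isOpen_inter_preimage hU isOpen_Ioo
    have hSm : MeasurableSet S := hSopen.measurableSet
    set g : ℝ → ℝ := (Set.Ioo t1 t2).indicator (fun t => 1 / t) with hg_def
    have hgm : Measurable g :=
      (measurable_const.div measurable_id).indicator measurableSet_Ioo
    have hco := hcoarea g hgm
    have hRHS : ∫ t in Set.Ioi (0:ℝ), g t = ∫ t in Set.Ioo t1 t2, 1 / t := by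
      have hsub : Set.Ioi (0:ℝ) ∩ Set.Ioo t1 t2 = Set.Ioo t1 t2 :=
        Set.inter_eq_self_of_subset_right (fun x hx => lt_trans ht1 hx.1)
      rw [hg_def, setIntegral_indicator measurableSet_Ioo, hsub]
    set F : E n → ℝ := fun x => 1 / G x * ‖gradient G x‖ ^ p with hF_def
    have hLHS : ∫ x in Ω \ {0}, g (G x) * ‖gradient G x‖ ^ p = ∫ x in S, F x := by
      have h1 : ∀ x ∈ Ω \ {0}, g (G x) * ‖gradient G x‖ ^ p = S.indicator F x := by
        intro x hx
        by_cases hmem : t1 < G x ∧ G x < t2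
        · rw [Set.indicator_of_mem (by exact ⟨hx, hmem⟩), hg_def,
            Set.indicator_of_mem (Set.mem_Ioo.mpr hmem)]
        · rw [Set.indicator_of_notMem (fun h => hmem h.2), hg_def,
            Set.indicator_of_notMem (fun h => hmem (Set.mem_Ioo.mp h)), zero_mul]
      rw [setIntegral_congr_fun hA h1, setIntegral_indicator hSm,
        Set.inter_eq_self_of_subset_right hSsub]
    -- gradient identity on S
    have hgrad : ∀ x ∈ S, ‖gradient v x‖ ^ p = q ^ p * F x := by
      intro x hx
      have hxU : x ∈ Ω \ {0} := hx.1
      have hGx : 0 < G x := hGpos x hxU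
      have hd : DifferentiableAt ℝ G x :=
        (hG.differentiableOn one_ne_zero x hxU).differentiableAt (hU.mem_nhds hxU)
      have hder : HasFDerivAt v ((q * G x ^ (q - 1)) • fderiv ℝ G x) x :=
        (Real.hasDerivAt_rpow_const (Or.inl hGx.ne')).comp_hasFDerivAt x hd.hasFDerivAt
      have hgv : gradient v x = (q * G x ^ (q - 1)) • gradient G x := by
        rw [gradient, hder.fderiv, LinearIsometryEquiv.map_smul, gradient]
      have hs : (0:ℝ) < q * G x ^ (q - 1) :=
        mul_pos hq (Real.rpow_pos_of_pos hGx _)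
      rw [hgv, norm_smul, Real.norm_eq_abs, abs_of_pos hs,
        Real.mul_rpow hs.le (norm_nonneg _),
        Real.mul_rpow hq.le (Real.rpow_pos_of_pos hGx _).le,
        ← Real.rpow_mul hGx.le]
      have hqexp : (q - 1) * p = -1 := by
        rw [hq_def]; field_simp; ring
      rw [hqexp, Real.rpow_neg_one]
      simp only [hF_def, one_div]
      ring
    calc ∫ x in S, ‖gradient v x‖ ^ p = ∫ x in S, q ^ p * F x :=
          setIntegral_congr_fun hSm hgrad
      _ = q ^ p * ∫ x in S, F x := integral_const_mul _ _
      _ = q ^ p * (c * ∫ t in Set.Ioo t1 t2, 1 / t) := by rw [← hLHS, hco, hRHS]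
      _ = q ^ p * c * ∫ t in Set.Ioo t1 t2, 1 / t := by ring
  have hK : 0 < q ^ p * c := mul_pos hqp hc
  -- Part 2
  have part2 : ∀ t1 : ℝ, 0 < t1 →
      Filter.Tendsto (fun t2 => q ^ p * c * ∫ t in Set.Ioo t1 t2, 1 / t)
        Filter.atTop Filter.atTop := by
    intro t1 ht1
    have hev : (fun t2 => q ^ p * c * (Real.log t2 - Real.log t1))
        =ᶠ[Filter.atTop] (fun t2 => q ^ p * c * ∫ t in Set.Ioo t1 t2, 1 / t) := by
      filter_upwards [Filter.eventually_gt_atTop t1] with t2 h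
      rw [log_int t1 t2 ht1 h]
    refine Filter.Tendsto.congr' hev ?_
    refine Filter.Tendsto.const_mul_atTop hK ?_
    simpa [sub_eq_add_neg] using
      Filter.tendsto_atTop_add_const_right Filter.atTop (-Real.log t1)
        Real.tendsto_log_atTop
  refine ⟨part1, part2, ?_⟩
  -- Part 3
  set L := ∫⁻ x in Ω \ {0}, ENNReal.ofReal (‖gradient v x‖ ^ p) with hL_def
  have key : ∀ M : ℝ, ENNReal.ofReal M ≤ L := by
    intro M
    obtain ⟨t2, hMt2, ht2⟩ :=
      (((part2 1 one_pos).eventually_ge_atTop M).and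
        (Filter.eventually_gt_atTop 1)).exists
    set S : Set (E n) := {x | x ∈ Ω \ {0} ∧ 1 < G x ∧ G x < t2} with hS_def
    have h1 := part1 1 t2 one_pos ht2
    by_cases hint : Integrable (fun x => ‖gradient v x‖ ^ p) ((volume : Measure (E n)).restrict S)
    · have hnn : 0 ≤ᵐ[(volume : Measure (E n)).restrict S] fun x => ‖gradient v x‖ ^ p :=
        Filter.Eventually.of_forall fun x => Real.rpow_nonneg (norm_nonneg _) p
      have heq := ofReal_integral_eq_lintegral_ofReal hint hnn
      calc ENNReal.ofReal M
          ≤ ENNReal.ofReal (∫ x in S, ‖gradient v x‖ ^ p) := by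
            apply ENNReal.ofReal_le_ofReal; rw [h1]; exact hMt2
        _ = ∫⁻ x in S, ENNReal.ofReal (‖gradient v x‖ ^ p) := heq
        _ ≤ L := lintegral_mono_set (fun x hx => hx.1)
    · have h0 : (0:ℝ) = q ^ p * c * ∫ t in Set.Ioo 1 t2, 1 / t := by
        rw [← h1, integral_undef hint]
      have : M ≤ 0 := by rw [← h0] at hMt2; exact hMt2
      simp [ENNReal.ofReal_eq_zero.mpr this]
  by_contra hne
  have hfin : L ≠ ⊤ := hne
  have h2 := key (L.toReal + 1)
  have h3 : L < ENNReal.ofReal (L.toReal + 1) := by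
    conv_lhs => rw [← ENNReal.ofReal_toReal hfin]
    exact ENNReal.ofReal_lt_ofReal_iff (by positivity) |>.mpr (by linarith)
  exact absurd (lt_of_lt_of_le h3 h2) (lt_irrefl L)
end

section
/- Radial supersolution interpolation: let 1 < p < ∞ and suppose v₀, v₁ are positive C² functions of r = |x| on an annulus not containing 0, with nonvanishing derivatives, each satisfying −(p−1)v_j'' − ((n−1)/r) v_j' + (V_j |(log v_j)'|^{2−p}) v_j ≥ 0. Then for α ∈ [0,1], v_α := v₁^α v₀^{1−α} (with (v_α)' nonvanishing) satisfies −(p−1)v_α'' − ((n−1)/r) v_α' + [(1−α)V₀|(log v₀)'|^{2−p} + α V₁|(log v₁)'|^{2−p} − (p−1)α(1−α)|(log(v₀/v₁))'|²] v_α ≥ 0. -/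
/-- Radial supersolution interpolation: if `v₀, v₁` are positive radial supersolutions of
the linearized radial `p`-Laplace ODE inequalities, then `v_α = v₁^α v₀^{1−α}` satisfies
the interpolated ODE inequality with the extra Hardy term. -/
theorem stmt16 (n : ℕ) (p α : ℝ) (hp : 1 < p) (hα : α ∈ Set.Icc (0:ℝ) 1)
    (a b : ℝ) (ha : 0 < a) (hab : a < b)
    (v₀ v₁ V₀ V₁ : ℝ → ℝ)
    (hv₀ : ContDiffOn ℝ 2 v₀ (Set.Ioo a b)) (hv₁ : ContDiffOn ℝ 2 v₁ (Set.Ioo a b))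
    (hv₀pos : ∀ r ∈ Set.Ioo a b, 0 < v₀ r) (hv₁pos : ∀ r ∈ Set.Ioo a b, 0 < v₁ r)
    (hv₀' : ∀ r ∈ Set.Ioo a b, deriv v₀ r ≠ 0)
    (hv₁' : ∀ r ∈ Set.Ioo a b, deriv v₁ r ≠ 0)
    (hsup₀ : ∀ r ∈ Set.Ioo a b,
      0 ≤ -(p - 1) * deriv (deriv v₀) r - ((n - 1) / r) * deriv v₀ r
        + V₀ r * |deriv v₀ r / v₀ r| ^ (2 - p) * v₀ r)
    (hsup₁ : ∀ r ∈ Set.Ioo a b,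
      0 ≤ -(p - 1) * deriv (deriv v₁) r - ((n - 1) / r) * deriv v₁ r
        + V₁ r * |deriv v₁ r / v₁ r| ^ (2 - p) * v₁ r) :
    let vα : ℝ → ℝ := fun r => v₁ r ^ α * v₀ r ^ (1 - α)
    (∀ r ∈ Set.Ioo a b, deriv vα r ≠ 0) →
    ∀ r ∈ Set.Ioo a b,
      0 ≤ -(p - 1) * deriv (deriv vα) r - ((n - 1) / r) * deriv vα r
        + ((1 - α) * V₀ r * |deriv v₀ r / v₀ r| ^ (2 - p)
            + α * V₁ r * |deriv v₁ r / v₁ r| ^ (2 - p)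
            - (p - 1) * α * (1 - α) * (deriv v₀ r / v₀ r - deriv v₁ r / v₁ r) ^ 2)
          * vα r := by
  intro vα hvα' r hr
  obtain ⟨hα0, hα1⟩ := hα
  have hIo : IsOpen (Set.Ioo a b) := isOpen_Ioo
  -- first derivative of vα on the annulus
  have key : ∀ x ∈ Set.Ioo a b, HasDerivAt vα
      (vα x * (α * deriv v₁ x / v₁ x + (1 - α) * deriv v₀ x / v₀ x)) x := by
    intro x hx
    have hb0 := hv₀pos x hx
    have hb1 := hv₁pos x hx
    have h0 : HasDerivAt v₀ (deriv v₀ x) x :=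
      ((hv₀.differentiableOn two_ne_zero).differentiableAt (hIo.mem_nhds hx)).hasDerivAt
    have h1 : HasDerivAt v₁ (deriv v₁ x) x :=
      ((hv₁.differentiableOn two_ne_zero).differentiableAt (hIo.mem_nhds hx)).hasDerivAt
    have H1 : HasDerivAt (fun y => v₁ y ^ α) (deriv v₁ x * α * v₁ x ^ (α - 1)) x :=
      h1.rpow_const (Or.inl hb1.ne')
    have H0 : HasDerivAt (fun y => v₀ y ^ (1 - α)) (deriv v₀ x * (1 - α) * v₀ x ^ (1 - α - 1)) x :=
      h0.rpow_const (Or.inl hb0.ne')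
    have := H1.mul H0
    convert this using 1
    · rfl
    · rfl
    · rfl
    have e1 : v₁ x ^ (α - 1) = v₁ x ^ α / v₁ x := by
      rw [Real.rpow_sub hb1, Real.rpow_one]
    have e0 : v₀ x ^ (1 - α - 1) = v₀ x ^ (1 - α) / v₀ x := by
      rw [Real.rpow_sub hb0, Real.rpow_one]
    rw [e1, e0]
    simp only [vα]
    field_simp
  have hweq : Set.EqOn (deriv vα)
      (fun x => vα x * (α * deriv v₁ x / v₁ x + (1 - α) * deriv v₀ x / v₀ x))
      (Set.Ioo a b) := fun x hx => (key x hx).deriv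
  -- abbreviations at the point r
  have hb0 := hv₀pos r hr
  have hb1 := hv₁pos r hr
  have hr0 : (0:ℝ) < r := lt_trans ha hr.1
  have h0 : HasDerivAt v₀ (deriv v₀ r) r :=
    ((hv₀.differentiableOn two_ne_zero).differentiableAt (hIo.mem_nhds hr)).hasDerivAt
  have h1 : HasDerivAt v₁ (deriv v₁ r) r :=
    ((hv₁.differentiableOn two_ne_zero).differentiableAt (hIo.mem_nhds hr)).hasDerivAt
  have hs0 : HasDerivAt (deriv v₀) (deriv (deriv v₀) r) r :=
    (((hv₀.deriv_of_isOpen hIo le_rfl).differentiableOn one_ne_zero).differentiableAt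
      (hIo.mem_nhds hr)).hasDerivAt
  have hs1 : HasDerivAt (deriv v₁) (deriv (deriv v₁) r) r :=
    (((hv₁.deriv_of_isOpen hIo le_rfl).differentiableOn one_ne_zero).differentiableAt
      (hIo.mem_nhds hr)).hasDerivAt
  -- derivative of the quotient terms
  have Hq1 : HasDerivAt (fun x => α * deriv v₁ x / v₁ x)
      ((α * deriv (deriv v₁) r * v₁ r - α * deriv v₁ r * deriv v₁ r) / v₁ r ^ 2) r :=
    (hs1.const_mul α).div h1 hb1.ne'
  have Hq0 : HasDerivAt (fun x => (1 - α) * deriv v₀ x / v₀ x)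
      (((1 - α) * deriv (deriv v₀) r * v₀ r - (1 - α) * deriv v₀ r * deriv v₀ r) / v₀ r ^ 2) r :=
    (hs0.const_mul (1 - α)).div h0 hb0.ne'
  have Hw : HasDerivAt
      (fun x => vα x * (α * deriv v₁ x / v₁ x + (1 - α) * deriv v₀ x / v₀ x))
      ((vα r * (α * deriv v₁ r / v₁ r + (1 - α) * deriv v₀ r / v₀ r))
          * (α * deriv v₁ r / v₁ r + (1 - α) * deriv v₀ r / v₀ r)
        + vα r * ((α * deriv (deriv v₁) r * v₁ r - α * deriv v₁ r * deriv v₁ r) / v₁ r ^ 2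
          + ((1 - α) * deriv (deriv v₀) r * v₀ r - (1 - α) * deriv v₀ r * deriv v₀ r) / v₀ r ^ 2))
      r := (key r hr).mul (Hq1.add Hq0)
  have hD : deriv vα r = vα r * (α * deriv v₁ r / v₁ r + (1 - α) * deriv v₀ r / v₀ r) :=
    (key r hr).deriv
  have hS : deriv (deriv vα) r =
      (vα r * (α * deriv v₁ r / v₁ r + (1 - α) * deriv v₀ r / v₀ r))
          * (α * deriv v₁ r / v₁ r + (1 - α) * deriv v₀ r / v₀ r)
        + vα r * ((α * deriv (deriv v₁) r * v₁ r - α * deriv v₁ r * deriv v₁ r) / v₁ r ^ 2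
          + ((1 - α) * deriv (deriv v₀) r * v₀ r - (1 - α) * deriv v₀ r * deriv v₀ r) / v₀ r ^ 2) := by
    have heq : deriv vα =ᶠ[nhds r]
        (fun x => vα x * (α * deriv v₁ x / v₁ x + (1 - α) * deriv v₀ x / v₀ x)) :=
      Filter.eventuallyEq_of_mem (hIo.mem_nhds hr) hweq
    rw [heq.deriv_eq]
    exact Hw.deriv
  have hvapos : 0 < vα r :=
    mul_pos (Real.rpow_pos_of_pos hb1 _) (Real.rpow_pos_of_pos hb0 _)
  have hE0 := hsup₀ r hr
  have hE1 := hsup₁ r hr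
  have hgoal :
      -(p - 1) * deriv (deriv vα) r - ((n - 1) / r) * deriv vα r
        + ((1 - α) * V₀ r * |deriv v₀ r / v₀ r| ^ (2 - p)
            + α * V₁ r * |deriv v₁ r / v₁ r| ^ (2 - p)
            - (p - 1) * α * (1 - α) * (deriv v₀ r / v₀ r - deriv v₁ r / v₁ r) ^ 2)
          * vα r
      = α * (vα r / v₁ r) *
          (-(p - 1) * deriv (deriv v₁) r - ((n - 1) / r) * deriv v₁ r
            + V₁ r * |deriv v₁ r / v₁ r| ^ (2 - p) * v₁ r)
        + (1 - α) * (vα r / v₀ r) *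
          (-(p - 1) * deriv (deriv v₀) r - ((n - 1) / r) * deriv v₀ r
            + V₀ r * |deriv v₀ r / v₀ r| ^ (2 - p) * v₀ r) := by
    rw [hS, hD]
    field_simp
    ring
  rw [hgoal]
  have h1' : 0 ≤ α * (vα r / v₁ r) := mul_nonneg hα0 (div_pos hvapos hb1).le
  have h0' : 0 ≤ (1 - α) * (vα r / v₀ r) := mul_nonneg (by linarith) (div_pos hvapos hb0).le
  exact add_nonneg (mul_nonneg h1' hE1) (mul_nonneg h0' hE0)
end
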